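/- arXiv:1403.1126 — 4 statements merged into one kernel-verified Lean document; each statement's English description precedes it below -/
import Mathlib

section
/- If K₁, …, Kₘ are compact subsets of ℂ and K = K₁ × ⋯ × Kₘ, and every continuous function on K holomorphic on the interior of K is a uniform limit of polynomials on K, then each complement ℂ \ Kᵢ is connected. -/
open Metric Set Bornology

/-- Evaluation of a multivariate polynomial along one coordinate is differentiable. -/
lemma mvpoly_update_differentiable {m : ℕ} (P : MvPolynomial (Fin m) ℂ)
    (w : Fin m → ℂ) (i : Fin m) :
    Differentiable ℂ (fun t : ℂ => MvPolynomial.eval (Function.update w i t) P) := by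
  induction P using MvPolynomial.induction_on with
  | C a => simpa using differentiable_const a
  | add p q hp hq => simpa [MvPolynomial.eval_add] using (hp.add hq : Differentiable ℂ (fun t => _ + _))
  | mul_X p j hp =>
      have hX : Differentiable ℂ (fun t : ℂ => Function.update w i t j) := by
        by_cases h : j = i
        · subst h; simpa using differentiable_id
        · simpa [Function.update_apply, h] using differentiable_const (w j)
      simpa [MvPolynomial.eval_mul] using (hp.mul hX : Differentiable ℂ (fun t => _ * _))

/-- The complement of a closed ball in `ℂ` is connected. -/
lemma isConnected_compl_closedBall_complex {R : ℝ} (hR : 0 ≤ R) :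
    IsConnected (closedBall (0 : ℂ) R)ᶜ := by
  have h2 : (1 : Cardinal) < Module.rank ℝ ℂ := by
    rw [Complex.rank_real_complex]; norm_num
  have hS : IsConnected ((Ioi R) ×ˢ (sphere (0 : ℂ) 1)) :=
    (isConnected_Ioi (a := R)).prod (isConnected_sphere h2 0 zero_le_one)
  have himg : (fun p : ℝ × ℂ => p.1 • p.2) '' ((Ioi R) ×ˢ (sphere (0 : ℂ) 1))
      = (closedBall (0 : ℂ) R)ᶜ := by
    ext z
    simp only [mem_image, mem_prod, mem_Ioi, mem_sphere_iff_norm, sub_zero,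
      mem_compl_iff, mem_closedBall, dist_zero_right, not_le]
    constructor
    · rintro ⟨⟨t, v⟩, ⟨ht, hv⟩, rfl⟩
      have : ‖t • v‖ = |t| * ‖v‖ := by simp [norm_smul]
      rw [this, hv, mul_one, abs_of_pos (lt_of_le_of_lt hR ht)]
      exact ht
    · intro hz
      have hz0 : ‖z‖ ≠ 0 := ne_of_gt (lt_of_le_of_lt hR hz)
      refine ⟨(‖z‖, ‖z‖⁻¹ • z), ⟨hz, ?_⟩, ?_⟩
      · rw [norm_smul, norm_inv, norm_norm, inv_mul_cancel₀ hz0]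
      · rw [smul_smul, mul_inv_cancel₀ hz0, one_smul]
  exact himg ▸ hS.image _ (continuous_fst.smul continuous_snd).continuousOn

/-- **Necessity direction.** If `K₁, …, Kₘ` are nonempty compact subsets of `ℂ` and every
continuous function on `K = K₁ × ⋯ × Kₘ` holomorphic on the interior of `K` is a uniform
limit of polynomials on `K`, then each complement `ℂ \ Kᵢ` is connected. -/
theorem stmt1 (m : ℕ) (K : Fin m → Set ℂ)
    (hK : ∀ i, IsCompact (K i)) (hne : ∀ i, (K i).Nonempty)
    (happrox : ∀ f : (Fin m → ℂ) → ℂ,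
      ContinuousOn f (Set.pi Set.univ K) →
      DifferentiableOn ℂ f (interior (Set.pi Set.univ K)) →
      ∀ ε > 0, ∃ P : MvPolynomial (Fin m) ℂ,
        ∀ z ∈ Set.pi Set.univ K, ‖MvPolynomial.eval z P - f z‖ < ε) :
    ∀ i, IsConnected (K i)ᶜ := by
  intro i
  -- bound K i by a closed ball
  obtain ⟨R, hR0, hRK⟩ := ((hK i).isBounded).subset_closedBall_lt 0 0
  have hRnn : (0 : ℝ) ≤ R := le_of_lt hR0
  have hKo : IsOpen (K i)ᶜ := (hK i).isClosed.isOpen_compl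
  -- the big connected set outside the ball
  have hball : IsConnected (closedBall (0 : ℝ) R : Set ℂ)ᶜ :=
    isConnected_compl_closedBall_complex hRnn
  set x₀ : ℂ := ((R + 1 : ℝ) : ℂ) with hx₀def
  have hx₀ball : x₀ ∈ (closedBall (0 : ℂ) R)ᶜ := by
    simp only [mem_compl_iff, mem_closedBall, dist_zero_right, not_le, hx₀def]
    rw [Complex.norm_real]
    rw [Real.norm_eq_abs, abs_of_nonneg (by linarith)]
    linarith
  have hballK : (closedBall (0 : ℂ) R)ᶜ ⊆ (K i)ᶜ := compl_subset_compl.mpr hRK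
  have hx₀ : x₀ ∈ (K i)ᶜ := hballK hx₀ball
  set V := connectedComponentIn (K i)ᶜ x₀ with hVdef
  have hballV : (closedBall (0 : ℂ) R)ᶜ ⊆ V :=
    hball.isPreconnected.subset_connectedComponentIn hx₀ball hballK
  by_cases hc : (K i)ᶜ ⊆ V
  · have : (K i)ᶜ = V := Subset.antisymm hc (connectedComponentIn_subset _ _)
    rw [this]
    exact isConnected_connectedComponentIn_iff.mpr hx₀
  -- there is a bounded component U
  obtain ⟨a, ha, haV⟩ := Set.not_subset.mp hc
  set U := connectedComponentIn (K i)ᶜ a with hUdef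
  have hUopen : IsOpen U := hKo.connectedComponentIn
  have haU : a ∈ U := mem_connectedComponentIn ha
  have hUV : ∀ z, z ∈ U → z ∉ V := by
    intro z hzU hzV
    have h1 : U = connectedComponentIn (K i)ᶜ z := connectedComponentIn_eq hzU
    have h2 : V = connectedComponentIn (K i)ᶜ z := connectedComponentIn_eq hzV
    exact haV (h2 ▸ h1 ▸ haU)
  have hUb : U ⊆ closedBall (0 : ℂ) R := by
    intro z hz
    by_contra h
    exact hUV z hz (hballV h)
  -- the frontier of U lies in K i
  have hfront : frontier U ⊆ K i := by
    intro t ht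
    by_contra htK
    have htc : t ∈ (K i)ᶜ := htK
    have htcl : t ∈ closure U := ht.1
    have htnU : t ∉ U := by
      intro h
      exact ht.2 (by rwa [hUopen.interior_eq])
    -- the component of t is an open neighborhood meeting U
    have hW : IsOpen (connectedComponentIn (K i)ᶜ t) := hKo.connectedComponentIn
    have htW : t ∈ connectedComponentIn (K i)ᶜ t := mem_connectedComponentIn htc
    obtain ⟨u, huW, huU⟩ := mem_closure_iff.mp htcl _ hW htW
    have h1 : connectedComponentIn (K i)ᶜ t = connectedComponentIn (K i)ᶜ u :=
      connectedComponentIn_eq huW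
    have h2 : U = connectedComponentIn (K i)ᶜ u := connectedComponentIn_eq huU
    exact htnU (h2 ▸ h1 ▸ htW)
  -- the function 1/(z i - a)
  have hproj : Differentiable ℂ (fun z : Fin m → ℂ => z i) :=
    (ContinuousLinearMap.proj (R := ℂ) (φ := fun _ : Fin m => ℂ) i).differentiable
  have hne_a : ∀ z ∈ Set.pi Set.univ K, z i - a ≠ 0 := by
    intro z hz
    have : z i ∈ K i := hz i (mem_univ i)
    intro h
    exact ha (sub_eq_zero.mp h ▸ this)
  have hcont : ContinuousOn (fun z : Fin m → ℂ => (z i - a)⁻¹) (Set.pi Set.univ K) := by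
    apply ContinuousOn.inv₀
    · exact ((continuous_apply i).sub continuous_const).continuousOn
    · exact hne_a
  have hdiff : DifferentiableOn ℂ (fun z : Fin m → ℂ => (z i - a)⁻¹)
      (interior (Set.pi Set.univ K)) := by
    intro z hz
    have hzK : z ∈ Set.pi Set.univ K := interior_subset hz
    exact (((hproj.differentiableAt (x := z)).sub_const a).inv
      (hne_a z hzK)).differentiableWithinAt
  -- choose ε and the approximating polynomial
  set C : ℝ := R + ‖a‖ with hCdef
  have hC0 : 0 < C + 1 := by positivity
  set ε : ℝ := (2 * (C + 1))⁻¹ with hεdef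
  have hε : 0 < ε := by positivity
  obtain ⟨P, hP⟩ := happrox _ hcont hdiff ε hε
  -- freeze the other coordinates
  set w : (j : Fin m) → ℂ := fun j => (hne j).some with hwdef
  have hw : ∀ j, w j ∈ K j := fun j => (hne j).some_mem
  have hupd : ∀ t, t ∈ K i → Function.update w i t ∈ Set.pi Set.univ K := by
    intro t ht j _
    rcases eq_or_ne j i with rfl | hji
    · simpa using ht
    · simpa [Function.update_apply, hji] using hw j
  -- the one-variable entire function q
  set g : ℂ → ℂ := fun t => MvPolynomial.eval (Function.update w i t) P with hgdef
  have hg : Differentiable ℂ g := mvpoly_update_differentiable P w i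
  set q : ℂ → ℂ := fun t => (t - a) * g t - 1 with hqdef
  have hq : Differentiable ℂ q :=
    (((differentiable_id.sub_const a).mul hg).sub_const 1)
  -- bound q on the frontier of U
  have hbound : ∀ t ∈ frontier U, ‖q t‖ ≤ 2⁻¹ := by
    intro t ht
    have htK : t ∈ K i := hfront ht
    have hmem : Function.update w i t ∈ Set.pi Set.univ K := hupd t htK
    have hta : t - a ≠ 0 := by
      intro h; exact ha (sub_eq_zero.mp h ▸ htK)
    have hfeq : ((Function.update w i t) i - a)⁻¹ = (t - a)⁻¹ := by simp
    have key : q t = (t - a) * (g t - (t - a)⁻¹) := by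
      rw [hqdef]
      field_simp
    have hnorm : ‖q t‖ = ‖t - a‖ * ‖g t - (t - a)⁻¹‖ := by
      rw [key, norm_mul]
    have h1 : ‖t - a‖ ≤ C := by
      calc ‖t - a‖ ≤ ‖t‖ + ‖a‖ := norm_sub_le _ _
        _ ≤ R + ‖a‖ := by
            have := hRK htK
            simp only [mem_closedBall, dist_zero_right] at this
            linarith
    have h2 : ‖g t - (t - a)⁻¹‖ < ε := by
      have := hP _ hmem
      rwa [hfeq] at this
    calc ‖q t‖ = ‖t - a‖ * ‖g t - (t - a)⁻¹‖ := hnorm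
      _ ≤ C * ε := by
          apply mul_le_mul h1 h2.le (norm_nonneg _) (by positivity)
      _ ≤ (C + 1) * ε := by nlinarith
      _ = 2⁻¹ := by rw [hεdef]; field_simp
  -- maximum modulus principle gives a contradiction at a
  have hUbd : IsBounded U := (isBounded_closedBall).subset hUb
  have hmax : ‖q a‖ ≤ 2⁻¹ :=
    Complex.norm_le_of_forall_mem_frontier_norm_le hUbd hq.diffContOnCl hbound
      (subset_closure haU)
  have : q a = -1 := by simp [hqdef]
  rw [this] at hmax
  norm_num at hmax
end

section
/- For the function f((zₙ)) = ∑_{n=1}^∞ zₙⁿ/n² on the infinite polydisc, the directional derivative in the direction ν = (1,1,1,…) at the point p_m = (z_{m,1},…,z_{m,m},0,0,…) with z_{m,n} = 1 − 1/m equals ∑_{n=1}^m (1 − 1/m)^{n−1}/n, and this quantity tends to +∞ as m → ∞. -/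
open Finset Filter

/-- For `f((zₙ)ₙ≥1) = ∑_{n=1}^∞ zₙⁿ/n²` (indexed here by `n : ℕ` as
`∑_{n=0}^∞ zₙ^{n+1}/(n+1)²`) on the infinite polydisc, the directional derivative in the
direction `ν = (1,1,1,…)` at the point `p_m` whose first `m` coordinates equal `1 - 1/m` and
whose remaining coordinates vanish equals `∑_{n=1}^m (1 - 1/m)^{n-1}/n`, and this quantity
tends to `+∞` as `m → ∞`. -/
theorem stmt11
    (f : (ℕ → ℂ) → ℂ) (hf : ∀ z : ℕ → ℂ, f z = ∑' n : ℕ, z n ^ (n + 1) / ((n : ℂ) + 1) ^ 2)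
    (p : ℕ → ℕ → ℂ) (hp : ∀ m n : ℕ, p m n = if n < m then (1 : ℂ) - 1 / m else 0) :
    (∀ m : ℕ, 1 ≤ m →
      HasDerivAt (fun t : ℂ => f fun n => p m n + t)
        (∑ n ∈ Finset.range m, ((1 : ℂ) - 1 / m) ^ n / ((n : ℂ) + 1)) 0) ∧
    Tendsto (fun m : ℕ => ∑ n ∈ Finset.range m, ((1 : ℝ) - 1 / m) ^ n / ((n : ℝ) + 1))
      atTop atTop := by
  constructor
  · intro m hm
    have hm0 : (0 : ℝ) < m := by exact_mod_cast hm
    have hm1 : (1 : ℝ) ≤ m := by exact_mod_cast hm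
    set q : ℝ := 1 - 1 / (2 * m) with hq
    have hr : (0 : ℝ) < 1 / (2 * m) := by positivity
    have hrhalf : (1 : ℝ) / (2 * m) ≤ 1 / 2 := by
      apply div_le_div_of_nonneg_left (by norm_num) (by norm_num)
      linarith
    have hq0 : 0 ≤ q := by simp only [hq]; linarith
    have hq1 : q < 1 := by simp only [hq]; linarith
    have hqhalf : (1 : ℝ) / 2 ≤ q := by simp only [hq]; linarith
    set s : Set ℂ := Metric.ball 0 (1 / (2 * m)) with hs
    have h0s : (0 : ℂ) ∈ s := by
      simp only [hs, Metric.mem_ball, dist_zero_right, norm_zero]; exact hr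
    -- the summable bound
    have hu : Summable fun n : ℕ => q ^ n := summable_geometric_of_lt_one hq0 hq1
    -- key norm bound
    have key : ∀ (n : ℕ) (y : ℂ), y ∈ s → ‖p m n + y‖ ≤ q := by
      intro n y hy
      have hy' : ‖y‖ < 1 / (2 * m) := by simpa [hs] using hy
      rw [hp]
      split_ifs with h
      · calc ‖(1 : ℂ) - 1 / m + y‖ ≤ ‖(1 : ℂ) - 1 / m‖ + ‖y‖ := norm_add_le _ _
          _ ≤ (1 - 1 / m) + 1 / (2 * m) := by
              have e : ((1 : ℂ) - 1 / m) = ((1 - 1 / (m : ℝ) : ℝ) : ℂ) := by push_cast; ring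
              have hnn : (0 : ℝ) ≤ 1 - 1 / (m : ℝ) := by
                have : 1 / (m : ℝ) ≤ 1 := by rw [div_le_one hm0]; exact hm1
                linarith
              have hnorm : ‖(1 : ℂ) - 1 / (m : ℂ)‖ = 1 - 1 / (m : ℝ) := by
                rw [e, Complex.norm_real, Real.norm_eq_abs, abs_of_nonneg hnn]
              rw [hnorm]
              linarith [hy'.le]
          _ = q := by rw [hq]; field_simp; ring
      · calc ‖(0 : ℂ) + y‖ = ‖y‖ := by simp
          _ ≤ 1 / (2 * m) := hy'.le
          _ ≤ 1 / 2 := hrhalf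
          _ ≤ q := hqhalf
    have hF : (fun t : ℂ => f fun n => p m n + t)
        = fun t : ℂ => ∑' n : ℕ, (p m n + t) ^ (n + 1) / ((n : ℂ) + 1) ^ 2 := by
      funext t; rw [hf]
    rw [hF]
    have hmain : HasDerivAt
        (fun t : ℂ => ∑' n : ℕ, (p m n + t) ^ (n + 1) / ((n : ℂ) + 1) ^ 2)
        (∑' n : ℕ, (p m n + 0) ^ n / ((n : ℂ) + 1)) 0 := by
      apply hasDerivAt_tsum_of_isPreconnected hu Metric.isOpen_ball
        (Convex.isPreconnected (convex_ball _ _))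
        (g' := fun n y => (p m n + y) ^ n / ((n : ℂ) + 1)) ?_ ?_ h0s ?_ h0s
      · intro n y _
        have h1 : HasDerivAt (fun t : ℂ => (p m n + t) ^ (n + 1))
            ((↑(n + 1) : ℂ) * (p m n + y) ^ n * 1) y := by
          have := ((hasDerivAt_id y).const_add (p m n)).fun_pow (n + 1)
          refine this.congr_deriv ?_
          simp
        have h2 := h1.div_const (((n : ℂ) + 1) ^ 2)
        refine h2.congr_deriv ?_
        have hne : ((n : ℂ) + 1) ≠ 0 := Nat.cast_add_one_ne_zero n
        push_cast
        rw [div_eq_div_iff (pow_ne_zero 2 hne) hne]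
        ring
      · intro n y hy
        rw [norm_div]
        have h1 : ‖(p m n + y) ^ n‖ ≤ q ^ n := by
          rw [norm_pow]; exact pow_le_pow_left₀ (norm_nonneg _) (key n y hy) n
        have h2 : (1 : ℝ) ≤ ‖((n : ℂ) + 1)‖ := by
          have e : ((n : ℂ) + 1) = ((n + 1 : ℕ) : ℂ) := by push_cast; ring
          rw [e, Complex.norm_natCast]
          exact_mod_cast Nat.succ_le_succ (Nat.zero_le n)
        exact le_trans (div_le_self (norm_nonneg _) h2) h1
      · apply Summable.of_norm_bounded hu
        intro n
        rw [norm_div]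
        have h1 : ‖(p m n + 0) ^ (n + 1)‖ ≤ q ^ n := by
          rw [norm_pow]
          calc ‖p m n + 0‖ ^ (n + 1) ≤ q ^ (n + 1) :=
              pow_le_pow_left₀ (norm_nonneg _) (key n 0 h0s) _
            _ ≤ q ^ n := pow_le_pow_of_le_one hq0 hq1.le (Nat.le_succ n)
        have h2 : (1 : ℝ) ≤ ‖((n : ℂ) + 1) ^ 2‖ := by
          rw [norm_pow]
          have e : ((n : ℂ) + 1) = ((n + 1 : ℕ) : ℂ) := by push_cast; ring
          have h3 : (1 : ℝ) ≤ ‖((n : ℂ) + 1)‖ := by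
            rw [e, Complex.norm_natCast]
            exact_mod_cast Nat.succ_le_succ (Nat.zero_le n)
          nlinarith [norm_nonneg ((n : ℂ) + 1)]
        exact le_trans (div_le_self (norm_nonneg _) h2) h1
    convert hmain using 1
    have hcg : ∀ n ∈ Finset.range m,
        ((1 : ℂ) - 1 / m) ^ n / ((n : ℂ) + 1) = (p m n + 0) ^ n / ((n : ℂ) + 1) := by
      intro n hn
      rw [mem_range] at hn
      rw [hp]
      simp [hn]
    rw [Finset.sum_congr rfl hcg, eq_comm]
    apply tsum_eq_sum
    intro n hn
    rw [mem_range, not_lt] at hn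
    have h1 : p m n = 0 := by rw [hp]; simp [Nat.not_lt.mpr hn]
    rw [h1, add_zero, zero_pow, zero_div]
    omega
  · -- divergence part
    have hbound : ∀ m : ℕ, 1 ≤ m →
        (∑ n ∈ Finset.range m, (1 / ((n : ℝ) + 1))) - 1
          ≤ ∑ n ∈ Finset.range m, ((1 : ℝ) - 1 / m) ^ n / ((n : ℝ) + 1) := by
      intro m hm
      have hm0 : (0 : ℝ) < m := by exact_mod_cast hm
      have step : ∀ n ∈ Finset.range m,
          1 / ((n : ℝ) + 1) - 1 / m ≤ ((1 : ℝ) - 1 / m) ^ n / ((n : ℝ) + 1) := by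
        intro n hn
        rw [mem_range] at hn
        have hn1 : (0 : ℝ) < (n : ℝ) + 1 := by positivity
        have hber : 1 - (n : ℝ) / m ≤ ((1 : ℝ) - 1 / m) ^ n := by
          have h := one_add_mul_le_pow (a := -(1 / (m : ℝ))) (by
            have : 1 / (m : ℝ) ≤ 1 := by rw [div_le_one hm0]; exact_mod_cast hm
            linarith) n
          calc 1 - (n : ℝ) / m = 1 + (n : ℝ) * (-(1 / m)) := by ring
            _ ≤ (1 + -(1 / (m : ℝ))) ^ n := h
            _ = ((1 : ℝ) - 1 / m) ^ n := by ring_nf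
        have h2 : (1 - (n : ℝ) / m) / ((n : ℝ) + 1) ≤ ((1 : ℝ) - 1 / m) ^ n / ((n : ℝ) + 1) := by
          gcongr
        refine le_trans ?_ h2
        have e1 : (1 - (n : ℝ) / m) / ((n : ℝ) + 1)
            = 1 / ((n : ℝ) + 1) - ((n : ℝ) / m) / ((n : ℝ) + 1) := by ring
        have e2 : ((n : ℝ) / m) / ((n : ℝ) + 1) ≤ 1 / m := by
          rw [div_div, div_le_div_iff₀ (by positivity) hm0]
          nlinarith
        rw [e1]
        linarith
      calc (∑ n ∈ Finset.range m, (1 / ((n : ℝ) + 1))) - 1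
          ≤ ∑ n ∈ Finset.range m, (1 / ((n : ℝ) + 1) - 1 / m) := by
            rw [Finset.sum_sub_distrib]
            simp only [Finset.sum_const, card_range, nsmul_eq_mul]
            have : (m : ℝ) * (1 / m) = 1 := by field_simp
            rw [this]
        _ ≤ ∑ n ∈ Finset.range m, ((1 : ℝ) - 1 / m) ^ n / ((n : ℝ) + 1) :=
            Finset.sum_le_sum step
    have hharm : Tendsto (fun m : ℕ => (∑ n ∈ Finset.range m, (1 / ((n : ℝ) + 1))) - 1)
        atTop atTop := by
      apply Filter.tendsto_atTop_add_const_right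
      exact Real.tendsto_sum_range_one_div_nat_succ_atTop
    apply tendsto_atTop_mono' _ _ hharm
    filter_upwards [eventually_ge_atTop 1] with m hm
    exact hbound m hm
end

section
/- The sequence ∑_{n=1}^m (1 − 1/m)^{n−1}/n tends to +∞ as m → ∞. -/
open Finset Filter

/-- The sequence `∑_{n=1}^m (1 - 1/m)^{n-1}/n` tends to `+∞` as `m → ∞`. -/
theorem stmt12 :
    Tendsto (fun m : ℕ => ∑ n ∈ Finset.range m, ((1 : ℝ) - 1 / m) ^ n / ((n : ℝ) + 1))
      atTop atTop := by
  have hbase : ∀ m : ℕ, (0 : ℝ) ≤ 1 - 1 / m := by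
    intro m
    rcases Nat.eq_zero_or_pos m with h | h
    · simp [h]
    · rw [sub_nonneg]
      exact div_le_one_of_le₀ (by exact_mod_cast h) (Nat.cast_nonneg m)
  have hdiv : Tendsto (fun m : ℕ => m / 2) atTop atTop :=
    tendsto_atTop_atTop.mpr fun b => ⟨2 * b, fun a ha => by omega⟩
  have h2 : Tendsto (fun m : ℕ => (1 / 2 : ℝ) * ∑ n ∈ range (m / 2), 1 / ((n : ℝ) + 1))
      atTop atTop :=
    (Real.tendsto_sum_range_one_div_nat_succ_atTop.comp hdiv).const_mul_atTop (by norm_num)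
  refine tendsto_atTop_mono (fun m => ?_) h2
  calc (1 / 2 : ℝ) * ∑ n ∈ range (m / 2), 1 / ((n : ℝ) + 1)
      = ∑ n ∈ range (m / 2), (1 / 2 : ℝ) * (1 / ((n : ℝ) + 1)) := Finset.mul_sum _ _ _
    _ ≤ ∑ n ∈ range (m / 2), (1 - 1 / (m : ℝ)) ^ n / ((n : ℝ) + 1) := by
        refine Finset.sum_le_sum fun n hn => ?_
        have hn' : 2 * n < m := by
          have := Finset.mem_range.mp hn; omega
        have hm1 : (1 : ℝ) ≤ (m : ℝ) := by exact_mod_cast (by omega : 1 ≤ m)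
        have hber : (1 : ℝ) - n / m ≤ (1 - 1 / m) ^ n := by
          have := one_add_mul_le_pow (a := -(1 / (m : ℝ))) (by have := hbase m; linarith) n
          have hnm : (n : ℝ) * (1 / m) = n / m := by ring
          calc (1 : ℝ) - n / m = 1 + n * (-(1 / m)) := by rw [← hnm]; ring
            _ ≤ (1 + -(1 / m)) ^ n := this
            _ = (1 - 1 / m) ^ n := by ring_nf
        have hhalf : (n : ℝ) / m ≤ 1 / 2 := by
          rw [div_le_div_iff₀ (by linarith) (by norm_num)]
          have : (2 : ℝ) * n ≤ m := by exact_mod_cast hn'.le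
          linarith
        have hpos : (0 : ℝ) < (n : ℝ) + 1 := by positivity
        rw [mul_one_div, div_le_div_iff₀ hpos hpos]
        nlinarith
    _ ≤ ∑ n ∈ range m, (1 - 1 / (m : ℝ)) ^ n / ((n : ℝ) + 1) := by
        refine Finset.sum_le_sum_of_subset_of_nonneg
          (Finset.range_subset_range.mpr (by omega)) fun n _ _ => ?_
        have := hbase m
        positivity
end

section
/- Let G ⊂ ℂⁿ be open and connected, and let Pₖ be polynomials converging uniformly on G with respect to the chordal metric to a function f : G → ℂ ∪ {∞}. If f(z₀) = ∞ for some z₀ ∈ G, then f ≡ ∞ on G. -/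
/-- The chordal distance on the Riemann sphere `ℂ ∪ {∞} = OnePoint ℂ`. -/
noncomputable def chordal (a b : OnePoint ℂ) : ℝ :=
  Option.rec
    (Option.rec 0 (fun y => 1 / Real.sqrt (1 + ‖y‖ ^ 2)) b)
    (fun x => Option.rec (1 / Real.sqrt (1 + ‖x‖ ^ 2))
      (fun y => ‖x - y‖ /
        (Real.sqrt (1 + ‖x‖ ^ 2) * Real.sqrt (1 + ‖y‖ ^ 2))) b) a

open OnePoint Metric Set Filter MvPolynomial

lemma chordal_coe_infty (x : ℂ) :
    chordal (x : OnePoint ℂ) OnePoint.infty = 1 / Real.sqrt (1 + ‖x‖ ^ 2) := rfl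

lemma chordal_coe_coe (x y : ℂ) :
    chordal (x : OnePoint ℂ) (y : OnePoint ℂ) = ‖x - y‖ /
      (Real.sqrt (1 + ‖x‖ ^ 2) * Real.sqrt (1 + ‖y‖ ^ 2)) := rfl

lemma chordal_infty_infty : chordal OnePoint.infty OnePoint.infty = 0 := rfl

/-- The "reciprocal" map on the sphere, sending `∞` to `0` and `w` to `w⁻¹`. -/
noncomputable def sInv : OnePoint ℂ → ℂ := fun y => Option.rec 0 (fun w => w⁻¹) y

lemma one_le_S (x : ℂ) : 1 ≤ Real.sqrt (1 + ‖x‖ ^ 2) := by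
  nlinarith [Real.sq_sqrt (show (0:ℝ) ≤ 1 + ‖x‖ ^ 2 by positivity),
    Real.sqrt_nonneg (1 + ‖x‖ ^ 2), norm_nonneg x, sq_nonneg (‖x‖)]

lemma S_pos (x : ℂ) : 0 < Real.sqrt (1 + ‖x‖ ^ 2) :=
  lt_of_lt_of_le one_pos (one_le_S x)

lemma chordal_nonneg (x : ℂ) (y : OnePoint ℂ) : 0 ≤ chordal (x : OnePoint ℂ) y := by
  induction y using OnePoint.rec with
  | infty => rw [chordal_coe_infty]; positivity
  | coe w => rw [chordal_coe_coe]; positivity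

lemma sqrt_one_add_sq_lip {x y : ℝ} (hx : 0 ≤ x) (hy : 0 ≤ y) :
    |Real.sqrt (1 + x ^ 2) - Real.sqrt (1 + y ^ 2)| ≤ |x - y| := by
  have key : ∀ a b : ℝ, 0 ≤ a → 0 ≤ b →
      Real.sqrt (1 + a ^ 2) - Real.sqrt (1 + b ^ 2) ≤ |a - b| := by
    intro a b ha hb
    have hb' : b ≤ Real.sqrt (1 + b ^ 2) := by
      have : b = Real.sqrt (b ^ 2) := (Real.sqrt_sq hb).symm
      rw [this]
      exact Real.sqrt_le_sqrt (by nlinarith)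
    have h2 : Real.sqrt (1 + a ^ 2) ≤ Real.sqrt (1 + b ^ 2) + |a - b| := by
      have hnn : 0 ≤ Real.sqrt (1 + b ^ 2) + |a - b| := by positivity
      rw [show Real.sqrt (1 + b ^ 2) + |a - b|
          = Real.sqrt ((Real.sqrt (1 + b ^ 2) + |a - b|) ^ 2) from (Real.sqrt_sq hnn).symm]
      apply Real.sqrt_le_sqrt
      have hsq : Real.sqrt (1 + b ^ 2) ^ 2 = 1 + b ^ 2 := Real.sq_sqrt (by positivity)
      nlinarith [le_abs_self (a - b), abs_nonneg (a - b), sq_abs (a - b)]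
    linarith
  exact abs_sub_le_iff.mpr ⟨key x y hx hy, by rw [abs_sub_comm]; exact key y x hy hx⟩

/-- Triangle-type inequality: the chordal distance to `∞` is `1`-Lipschitz. -/
lemma chordal_infty_lip (x : ℂ) (y : OnePoint ℂ) :
    |chordal (x : OnePoint ℂ) OnePoint.infty - chordal y OnePoint.infty| ≤
      chordal (x : OnePoint ℂ) y := by
  induction y using OnePoint.rec with
  | infty =>
      rw [chordal_infty_infty, sub_zero, abs_of_nonneg (by rw [chordal_coe_infty]; positivity)]
  | coe w =>
      rw [chordal_coe_infty, chordal_coe_infty, chordal_coe_coe]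
      have hApos := S_pos x
      have hBpos := S_pos w
      have h1 : 1 / Real.sqrt (1 + ‖x‖ ^ 2) - 1 / Real.sqrt (1 + ‖w‖ ^ 2)
          = (Real.sqrt (1 + ‖w‖ ^ 2) - Real.sqrt (1 + ‖x‖ ^ 2)) /
            (Real.sqrt (1 + ‖x‖ ^ 2) * Real.sqrt (1 + ‖w‖ ^ 2)) := by
        field_simp
      rw [h1, abs_div, abs_mul, abs_of_pos hApos, abs_of_pos hBpos]
      gcongr
      calc |Real.sqrt (1 + ‖w‖ ^ 2) - Real.sqrt (1 + ‖x‖ ^ 2)|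
          ≤ |‖w‖ - ‖x‖| :=
            sqrt_one_add_sq_lip (norm_nonneg w) (norm_nonneg x)
        _ ≤ ‖w - x‖ := abs_norm_sub_norm_le w x
        _ = ‖x - w‖ := norm_sub_rev w x

lemma abs_gt_of_chordal_infty_lt {c : ℂ} {y : ℝ} (hy : 0 ≤ y)
    (h : chordal (c : OnePoint ℂ) OnePoint.infty < 1 / Real.sqrt (1 + y ^ 2)) :
    y < ‖c‖ := by
  rw [chordal_coe_infty] at h
  have hy' : 0 < Real.sqrt (1 + y ^ 2) := by positivity
  have h2 : Real.sqrt (1 + y ^ 2) < Real.sqrt (1 + ‖c‖ ^ 2) :=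
    lt_of_one_div_lt_one_div (S_pos c) h
  have h3 : 1 + y ^ 2 < 1 + ‖c‖ ^ 2 := by
    nlinarith [Real.sq_sqrt (show (0:ℝ) ≤ 1 + y ^ 2 by positivity),
      Real.sq_sqrt (show (0:ℝ) ≤ 1 + ‖c‖ ^ 2 by positivity),
      Real.sqrt_nonneg (1 + y ^ 2)]
  nlinarith [norm_nonneg c]

lemma one_lt_abs_of_chordal {c : ℂ} (h : chordal (c : OnePoint ℂ) OnePoint.infty < 1 / 2) :
    1 < ‖c‖ := by
  apply abs_gt_of_chordal_infty_lt zero_le_one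
  apply h.trans_le
  apply one_div_le_one_div_of_le (by positivity)
  nlinarith [Real.sq_sqrt (show (0:ℝ) ≤ 1 + (1:ℝ) ^ 2 by norm_num),
    Real.sqrt_nonneg (1 + (1:ℝ) ^ 2)]

lemma dist_inv_le_chordal {q w : ℂ} (hq : 1 < ‖q‖) (hw : 1 < ‖w‖) :
    dist w⁻¹ q⁻¹ ≤ 2 * chordal (q : OnePoint ℂ) (w : OnePoint ℂ) := by
  have hq0 : q ≠ 0 := by intro h; rw [h] at hq; simp at hq; linarith
  have hw0 : w ≠ 0 := by intro h; rw [h] at hw; simp at hw; linarith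
  have hqa : (0:ℝ) < ‖q‖ := lt_trans one_pos hq
  have hwa : (0:ℝ) < ‖w‖ := lt_trans one_pos hw
  have habs : dist w⁻¹ q⁻¹ = ‖q - w‖ / (‖q‖ * ‖w‖) := by
    rw [Complex.dist_eq, inv_sub_inv hw0 hq0, norm_div, norm_mul, mul_comm]
  rw [habs, chordal_coe_coe, mul_div_assoc']
  have hSq : Real.sqrt (1 + ‖q‖ ^ 2) ≤ Real.sqrt 2 * ‖q‖ := by
    rw [show Real.sqrt 2 * ‖q‖ = Real.sqrt (2 * ‖q‖ ^ 2) by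
      rw [Real.sqrt_mul (by norm_num), Real.sqrt_sq (norm_nonneg q)]]
    exact Real.sqrt_le_sqrt (by nlinarith)
  have hSw : Real.sqrt (1 + ‖w‖ ^ 2) ≤ Real.sqrt 2 * ‖w‖ := by
    rw [show Real.sqrt 2 * ‖w‖ = Real.sqrt (2 * ‖w‖ ^ 2) by
      rw [Real.sqrt_mul (by norm_num), Real.sqrt_sq (norm_nonneg w)]]
    exact Real.sqrt_le_sqrt (by nlinarith)
  have h2 : Real.sqrt 2 * Real.sqrt 2 = 2 := Real.mul_self_sqrt (by norm_num)
  have hprod : Real.sqrt (1 + ‖q‖ ^ 2) * Real.sqrt (1 + ‖w‖ ^ 2)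
      ≤ 2 * (‖q‖ * ‖w‖) := by
    calc Real.sqrt (1 + ‖q‖ ^ 2) * Real.sqrt (1 + ‖w‖ ^ 2)
        ≤ (Real.sqrt 2 * ‖q‖) * (Real.sqrt 2 * ‖w‖) :=
          mul_le_mul hSq hSw (Real.sqrt_nonneg _) (by positivity)
      _ = 2 * (‖q‖ * ‖w‖) := by
          linear_combination (‖q‖ * ‖w‖) * h2
  rw [div_le_div_iff₀ (by positivity) (by positivity)]
  nlinarith [norm_nonneg (q - w), S_pos q, S_pos w,
    mul_le_mul_of_nonneg_left hprod (norm_nonneg (q - w))]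

lemma dist_zero_inv_le_chordal {q : ℂ} (hq : 1 < ‖q‖) :
    dist 0 q⁻¹ ≤ 2 * chordal (q : OnePoint ℂ) OnePoint.infty := by
  have hqa : (0:ℝ) < ‖q‖ := lt_trans one_pos hq
  rw [dist_comm, Complex.dist_eq, sub_zero, norm_inv, chordal_coe_infty, inv_eq_one_div,
    mul_one_div]
  have hSq : Real.sqrt (1 + ‖q‖ ^ 2) ≤ Real.sqrt 2 * ‖q‖ := by
    rw [show Real.sqrt 2 * ‖q‖ = Real.sqrt (2 * ‖q‖ ^ 2) by
      rw [Real.sqrt_mul (by norm_num), Real.sqrt_sq (norm_nonneg q)]]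
    exact Real.sqrt_le_sqrt (by nlinarith)
  have hS0 : (0:ℝ) < Real.sqrt (1 + ‖q‖ ^ 2) := by positivity
  rw [div_le_div_iff₀ hqa hS0]
  nlinarith [Real.sq_sqrt (show (0:ℝ) ≤ 2 by norm_num), Real.sqrt_nonneg 2]

lemma mv_eval_differentiable {n : ℕ} (p : MvPolynomial (Fin n) ℂ) :
    Differentiable ℂ (fun z : Fin n → ℂ => MvPolynomial.eval z p) := by
  induction p using MvPolynomial.induction_on with
  | C a => simpa using differentiable_const a
  | add p q hp hq => simpa [Pi.add_def] using hp.add hq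
  | mul_X p i hp =>
      have hi : Differentiable ℂ (fun z : Fin n → ℂ => z i) :=
        differentiable_pi.mp differentiable_id i
      simpa [Pi.mul_def] using hp.mul hi

lemma chordal_eval_infty_continuous {n : ℕ} (p : MvPolynomial (Fin n) ℂ) :
    Continuous fun z : Fin n → ℂ =>
      chordal ((MvPolynomial.eval z p : ℂ) : OnePoint ℂ) OnePoint.infty := by
  have h1 : Continuous fun z : Fin n → ℂ => (eval z p : ℂ) := MvPolynomial.continuous_eval _
  have : Continuous fun z : Fin n → ℂ => 1 / Real.sqrt (1 + ‖eval z p‖ ^ 2) := by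
    apply continuous_const.div
    · exact Real.continuous_sqrt.comp (by continuity)
    · intro z; exact ne_of_gt (S_pos _)
  simpa [chordal_coe_infty] using this

/-- Core local lemma: if `f a = ∞` then `f ≡ ∞` on a ball around `a`. -/
lemma core {n : ℕ} {G : Set (Fin n → ℂ)} (hGo : IsOpen G)
    {P : ℕ → MvPolynomial (Fin n) ℂ} {f : (Fin n → ℂ) → OnePoint ℂ}
    (hconv : ∀ ε > 0, ∃ K : ℕ, ∀ k ≥ K, ∀ z ∈ G,
      chordal ((MvPolynomial.eval z (P k) : ℂ) : OnePoint ℂ) (f z) < ε)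
    {a : Fin n → ℂ} (ha : a ∈ G) (hfa : f a = OnePoint.infty) :
    ∃ r > 0, ball a r ⊆ G ∧ ∀ b ∈ ball a r, f b = OnePoint.infty := by
  obtain ⟨K, hK⟩ := hconv (1/8) (by norm_num)
  set v : (Fin n → ℂ) → ℝ := fun z => chordal ((eval z (P K) : ℂ) : OnePoint ℂ) OnePoint.infty
    with hv
  have hvcont : Continuous v := chordal_eval_infty_continuous (P K)
  have hva : v a < 1/8 := by
    have := hK K le_rfl a ha; rwa [hfa] at this
  -- a ball on which v < 1/4 and contained in G
  have hopen : IsOpen ({z | v z < 1/4} ∩ G) := (isOpen_lt hvcont continuous_const).inter hGo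
  obtain ⟨r, hr, hball⟩ := Metric.isOpen_iff.mp hopen a ⟨by simp only [mem_setOf_eq]; linarith, ha⟩
  have hballG : ball a r ⊆ G := fun z hz => (hball hz).2
  refine ⟨r, hr, hballG, ?_⟩
  -- on the ball, chordal (f z) ∞ < 3/8
  have hu : ∀ z ∈ ball a r, chordal (f z) OnePoint.infty < 3/8 := by
    intro z hz
    have h1 : v z < 1/4 := (hball hz).1
    have h2 := hK K le_rfl z (hballG hz)
    have h3 := chordal_infty_lip (eval z (P K)) (f z)
    have := abs_le.mp h3
    linarith [this.1]
  -- all large-index polynomials have modulus > 1 on the ball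
  have hq : ∀ k ≥ K, ∀ z ∈ ball a r, 1 < ‖eval z (P k)‖ := by
    intro k hk z hz
    apply one_lt_abs_of_chordal
    have h2 := hK k hk z (hballG hz)
    have h3 := chordal_infty_lip (eval z (P k)) (f z)
    have := abs_le.mp h3
    have h4 := hu z hz
    linarith [this.2]
  -- finite values of f on the ball have modulus > 1
  have hfin : ∀ z ∈ ball a r, ∀ w : ℂ, f z = (w : OnePoint ℂ) → 1 < ‖w‖ := by
    intro z hz w hw
    apply one_lt_abs_of_chordal
    have := hu z hz; rw [hw] at this; linarith
  -- the key uniform bound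
  have hbound : ∀ k ≥ K, ∀ z ∈ ball a r,
      dist (sInv (f z)) (eval z (P k))⁻¹ ≤
        2 * chordal ((eval z (P k) : ℂ) : OnePoint ℂ) (f z) := by
    intro k hk z hz
    cases hfz : f z using OnePoint.rec with
    | infty => exact dist_zero_inv_le_chordal (hq k hk z hz)
    | coe w => exact dist_inv_le_chordal (hq k hk z hz) (hfin z hz w hfz)
  -- now the complex-analytic part along complex lines
  intro b hb
  by_cases hba : b = a
  · rw [hba]; exact hfa
  set c : Fin n → ℂ := b - a with hc
  have hcn : 0 < ‖c‖ := by
    rw [norm_pos_iff]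
    intro h0
    exact hba (by rwa [hc, sub_eq_zero] at h0)
  have hbr : ‖c‖ < r := by
    have := mem_ball.mp hb; rwa [dist_eq_norm] at this
  set s : ℝ := r / ‖c‖ with hs
  have hs1 : 1 < s := (one_lt_div hcn).mpr hbr
  set l : ℂ → (Fin n → ℂ) := fun t => a + t • c with hl
  have hlmem : ∀ t ∈ ball (0:ℂ) s, l t ∈ ball a r := by
    intro t ht
    rw [mem_ball, dist_eq_norm, hl]
    simp only [add_sub_cancel_left]
    rw [norm_smul]
    have htn : ‖t‖ < s := by simpa [dist_eq_norm] using mem_ball.mp ht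
    calc ‖t‖ * ‖c‖ < s * ‖c‖ := by exact mul_lt_mul_of_pos_right htn hcn
      _ = r := by rw [hs]; field_simp
  have hl0 : l 0 = a := by simp [hl]
  have hl1 : l 1 = b := by simp [hl, hc]
  have hldiff : Differentiable ℂ l := (differentiable_id.smul_const c).const_add a
  set H : ℂ → ℂ := fun t => sInv (f (l t)) with hH
  set φ : ℕ → ℂ → ℂ := fun k t => ((eval (l t) (P k) : ℂ))⁻¹ with hφ
  -- uniform convergence of φ to H on ball 0 s
  have hunif : TendstoUniformlyOn φ H atTop (ball (0:ℂ) s) := by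
    rw [Metric.tendstoUniformlyOn_iff]
    intro ε hε
    obtain ⟨K', hK'⟩ := hconv (min (ε/4) (1/8)) (lt_min (by positivity) (by norm_num))
    filter_upwards [eventually_ge_atTop (max K K')] with k hk
    intro t ht
    have hkK : k ≥ K := le_trans (le_max_left _ _) hk
    have hkK' : k ≥ K' := le_trans (le_max_right _ _) hk
    have h1 := hK' k hkK' (l t) (hballG (hlmem t ht))
    have h2 := hbound k hkK (l t) (hlmem t ht)
    have h3 : (min (ε/4) (1/8) : ℝ) ≤ ε/4 := min_le_left _ _
    calc dist (H t) (φ k t) ≤ 2 * chordal ((eval (l t) (P k) : ℂ) : OnePoint ℂ) (f (l t)) := h2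
      _ < 2 * min (ε/4) (1/8) := by linarith
      _ ≤ ε/2 := by linarith
      _ < ε := by linarith
  -- differentiability of φ k for k ≥ K
  have hφdiff : ∀ᶠ k in atTop, DifferentiableOn ℂ (φ k) (ball (0:ℂ) s) := by
    filter_upwards [eventually_ge_atTop K] with k hk
    apply DifferentiableOn.inv
    · exact ((mv_eval_differentiable (P k)).comp hldiff).differentiableOn
    · intro t ht
      have h1 := hq k hk (l t) (hlmem t ht)
      intro h0
      rw [h0] at h1; simp at h1; linarith
  have hHdiff : DifferentiableOn ℂ H (ball (0:ℂ) s) :=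
    (hunif.tendstoLocallyUniformlyOn).differentiableOn hφdiff isOpen_ball
  have hHanal : AnalyticOnNhd ℂ H (ball (0:ℂ) s) := hHdiff.analyticOnNhd isOpen_ball
  have h0mem : (0:ℂ) ∈ ball (0:ℂ) s := mem_ball_self (by linarith)
  have h1mem : (1:ℂ) ∈ ball (0:ℂ) s := by
    rw [mem_ball, dist_eq_norm]; simpa using hs1
  have hH0 : H 0 = 0 := by rw [hH]; simp only [hl0, hfa]; rfl
  rcases (hHanal 0 h0mem).eventually_eq_zero_or_eventually_ne_zero with hzero | hne
  · -- H vanishes identically, so f b = ∞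
    have hEq : EqOn H 0 (ball (0:ℂ) s) :=
      hHanal.eqOn_zero_of_preconnected_of_eventuallyEq_zero
        (convex_ball (0:ℂ) s).isPreconnected h0mem hzero
    have hH1 : sInv (f b) = 0 := by
      have := hEq h1mem
      simpa [hH, hl1] using this
    cases hfb : f b using OnePoint.rec with
    | infty => rfl
    | coe w =>
        exfalso
        rw [hfb] at hH1
        replace hH1 : w⁻¹ = 0 := hH1
        have hw := hfin b hb w hfb
        have : w ≠ 0 := by intro h0; rw [h0] at hw; simp at hw; linarith
        exact this (inv_eq_zero.mp hH1)
  · -- contradiction via the maximum principle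
    exfalso
    rw [eventually_nhdsWithin_iff] at hne
    obtain ⟨ε₀, hε₀, hball₀⟩ := Metric.eventually_nhds_iff.mp hne
    set δ : ℝ := min (ε₀/2) (1/2) with hδdef
    have hδ : 0 < δ := lt_min (by linarith) (by norm_num)
    have hδs : δ < s := lt_of_le_of_lt (min_le_right _ _) (by linarith)
    have hsph : ∀ t ∈ sphere (0:ℂ) δ, t ∈ ball (0:ℂ) s := by
      intro t ht
      rw [mem_sphere, dist_eq_norm] at ht
      rw [mem_ball, dist_eq_norm]
      simp only [sub_zero] at ht ⊢
      rw [ht]; linarith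
    have hsphG : ∀ t ∈ sphere (0:ℂ) δ, l t ∈ ball a r := fun t ht => hlmem t (hsph t ht)
    have hsphne : ∀ t ∈ sphere (0:ℂ) δ, H t ≠ 0 := by
      intro t ht
      rw [mem_sphere] at ht
      have ht0 : t ≠ 0 := by
        intro h0; rw [h0] at ht; simp at ht; rw [← ht] at hδ; exact lt_irrefl _ hδ
      apply hball₀ ?_ ht0
      rw [ht]
      calc δ ≤ ε₀/2 := min_le_left _ _
        _ < ε₀ := by linarith
    have hcompact : IsCompact (sphere (0:ℂ) δ) := isCompact_sphere _ _
    have hnonempty : (sphere (0:ℂ) δ).Nonempty := NormedSpace.sphere_nonempty.mpr hδ.le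
    have hHcont : ContinuousOn (fun t => ‖H t‖) (sphere (0:ℂ) δ) :=
      ((hHdiff.continuousOn).mono (fun t ht => hsph t ht)).norm
    obtain ⟨t₀, ht₀, hminOn⟩ := hcompact.exists_isMinOn hnonempty hHcont
    set m := ‖H t₀‖ with hm
    have hmin : ∀ t ∈ sphere (0:ℂ) δ, m ≤ ‖H t‖ := fun t ht => isMinOn_iff.mp hminOn t ht
    have hm0 : 0 < m := norm_pos_iff.mpr (hsphne t₀ ht₀)
    set ε₂ : ℝ := 1 / Real.sqrt (1 + (2/m)^2) with hε₂def
    have hε₂ : 0 < ε₂ := by positivity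
    obtain ⟨K₂, hK₂⟩ := hconv (min (min (m/4) ε₂) (1/8))
      (lt_min (lt_min (by positivity) hε₂) (by norm_num))
    set k := max K K₂ with hkdef
    have hkK : k ≥ K := le_max_left _ _
    have hkK₂ : k ≥ K₂ := le_max_right _ _
    have hub : ∀ t ∈ sphere (0:ℂ) δ, ‖eval (l t) (P k)‖ ≤ 2/m := by
      intro t ht
      have h1 := hK₂ k hkK₂ (l t) (hballG (hsphG t ht))
      have h2 := hbound k hkK (l t) (hsphG t ht)
      have h3 : dist (H t) (φ k t) ≤ m/2 := by
        have hmin1 : (min (min (m/4) ε₂) (1/8) : ℝ) ≤ m/4 :=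
          le_trans (min_le_left _ _) (min_le_left _ _)
        calc dist (H t) (φ k t)
            ≤ 2 * chordal ((eval (l t) (P k) : ℂ) : OnePoint ℂ) (f (l t)) := h2
          _ ≤ 2 * (m/4) := by nlinarith
          _ = m/2 := by ring
      have h4 : m ≤ ‖H t‖ := hmin t ht
      have h5 : m/2 ≤ ‖φ k t‖ := by
        have hd : ‖H t‖ - ‖φ k t‖ ≤ dist (H t) (φ k t) := by
          rw [dist_eq_norm]; exact norm_sub_norm_le _ _
        linarith
      have hx1 : 1 < ‖eval (l t) (P k)‖ := hq k hkK (l t) (hsphG t ht)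
      have hx0 : (0:ℝ) < ‖(eval (l t) (P k) : ℂ)‖ := by
        linarith
      have h6 : ‖φ k t‖ = ‖(eval (l t) (P k) : ℂ)‖⁻¹ := by
        rw [hφ]; exact norm_inv _
      rw [h6] at h5
      have h7 : ‖(eval (l t) (P k) : ℂ)‖ ≤ (m/2)⁻¹ := by
        have := inv_anti₀ (by positivity : (0:ℝ) < m/2) h5
        rwa [inv_inv] at this
      rw [inv_div] at h7
      exact h7
    have hgd : Differentiable ℂ (fun t => (eval (l t) (P k) : ℂ)) :=
      (mv_eval_differentiable (P k)).comp hldiff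
    have hmax : ‖(eval (l 0) (P k) : ℂ)‖ ≤ 2/m := by
      apply Complex.norm_le_of_forall_mem_frontier_norm_le isBounded_ball
        hgd.diffContOnCl ?_ (subset_closure (mem_ball_self hδ))
      rw [frontier_ball (0:ℂ) (ne_of_gt hδ)]
      intro t ht
      exact hub t ht
    have hlow := hK₂ k hkK₂ a ha
    rw [hfa] at hlow
    have hgt : (2/m : ℝ) < ‖eval a (P k)‖ := by
      apply abs_gt_of_chordal_infty_lt (by positivity)
      exact lt_of_lt_of_le hlow (le_trans (min_le_left _ _) (min_le_right _ _))
    rw [hl0] at hmax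
    linarith



/-- Local lemma on the finite side: if `f z₁ ≠ ∞` then `f ≠ ∞` on a ball around `z₁`. -/
lemma core2 {n : ℕ} {G : Set (Fin n → ℂ)} (hGo : IsOpen G)
    {P : ℕ → MvPolynomial (Fin n) ℂ} {f : (Fin n → ℂ) → OnePoint ℂ}
    (hconv : ∀ ε > 0, ∃ K : ℕ, ∀ k ≥ K, ∀ z ∈ G,
      chordal ((MvPolynomial.eval z (P k) : ℂ) : OnePoint ℂ) (f z) < ε)
    {z₁ : Fin n → ℂ} (h1 : z₁ ∈ G) (hf1 : f z₁ ≠ OnePoint.infty) :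
    ∃ ρ > 0, ball z₁ ρ ⊆ G ∧ ∀ b ∈ ball z₁ ρ, f b ≠ OnePoint.infty := by
  obtain ⟨w, hw⟩ : ∃ w : ℂ, f z₁ = (w : OnePoint ℂ) := by
    cases h : f z₁ using OnePoint.rec with
    | infty => exact absurd h hf1
    | coe w => exact ⟨w, rfl⟩
  set u₁ := chordal ((w : OnePoint ℂ)) OnePoint.infty with hu₁
  have hu₁pos : 0 < u₁ := by rw [hu₁, chordal_coe_infty]; positivity
  obtain ⟨K, hK⟩ := hconv (u₁/3) (by positivity)
  set v : (Fin n → ℂ) → ℝ := fun z =>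
    chordal ((eval z (P K) : ℂ) : OnePoint ℂ) OnePoint.infty with hv
  have hvcont : Continuous v := chordal_eval_infty_continuous (P K)
  have hvz₁ : u₁/3 < v z₁ := by
    have h2 := hK K le_rfl z₁ h1
    have h3 := chordal_infty_lip (eval z₁ (P K)) (f z₁)
    rw [hw] at h2 h3
    have h4 := abs_le.mp h3
    have : chordal ((w : OnePoint ℂ)) OnePoint.infty = u₁ := rfl
    rw [this] at h4
    have := h4.2
    simp only [hv]
    linarith [h4.1, h4.2]
  have hopen : IsOpen ({z | u₁/3 < v z} ∩ G) :=
    (isOpen_lt continuous_const hvcont).inter hGo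
  obtain ⟨ρ, hρ, hball⟩ := Metric.isOpen_iff.mp hopen z₁ ⟨hvz₁, h1⟩
  refine ⟨ρ, hρ, fun z hz => (hball hz).2, ?_⟩
  intro b hb hfb
  have h5 : u₁/3 < v b := (hball hb).1
  have h6 := hK K le_rfl b (hball hb).2
  have h7 := chordal_infty_lip (eval b (P K)) (f b)
  rw [hfb, chordal_infty_infty, sub_zero] at h7
  rw [hfb] at h6
  have h8 : v b ≤ |chordal ((eval b (P K) : ℂ) : OnePoint ℂ) OnePoint.infty| :=
    le_abs_self _
  simp only [hv] at h5
  linarith [le_abs_self (chordal ((eval b (P K) : ℂ) : OnePoint ℂ) OnePoint.infty)]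

/-- If `G ⊂ ℂⁿ` is open and connected and polynomials `Pₖ` converge uniformly on `G` with
respect to the chordal metric to `f : G → ℂ ∪ {∞}`, and `f(z₀) = ∞` for some `z₀ ∈ G`, then
`f ≡ ∞` on `G`. -/
theorem stmt15 (n : ℕ) (G : Set (Fin n → ℂ)) (hGo : IsOpen G) (hGc : IsConnected G)
    (P : ℕ → MvPolynomial (Fin n) ℂ) (f : (Fin n → ℂ) → OnePoint ℂ)
    (hconv : ∀ ε > 0, ∃ K : ℕ, ∀ k ≥ K, ∀ z ∈ G,
      chordal ((MvPolynomial.eval z (P k) : ℂ) : OnePoint ℂ) (f z) < ε)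
    (z₀ : Fin n → ℂ) (hz₀ : z₀ ∈ G) (hfz₀ : f z₀ = OnePoint.infty) :
    ∀ z ∈ G, f z = OnePoint.infty := by
  intro b hb
  by_contra hfb
  -- choose radii for the two kinds of points
  have keyU : ∀ a : Fin n → ℂ, ∃ r : ℝ, a ∈ G → f a = OnePoint.infty →
      (0 < r ∧ ball a r ⊆ G ∧ ∀ z ∈ ball a r, f z = OnePoint.infty) := by
    intro a
    by_cases h : a ∈ G ∧ f a = OnePoint.infty
    · obtain ⟨r, hr, h2, h3⟩ := core hGo hconv h.1 h.2
      exact ⟨r, fun _ _ => ⟨hr, h2, h3⟩⟩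
    · exact ⟨1, fun hG hf => absurd ⟨hG, hf⟩ h⟩
  have keyW : ∀ a : Fin n → ℂ, ∃ r : ℝ, a ∈ G → f a ≠ OnePoint.infty →
      (0 < r ∧ ball a r ⊆ G ∧ ∀ z ∈ ball a r, f z ≠ OnePoint.infty) := by
    intro a
    by_cases h : a ∈ G ∧ f a ≠ OnePoint.infty
    · obtain ⟨r, hr, h2, h3⟩ := core2 hGo hconv h.1 h.2
      exact ⟨r, fun _ _ => ⟨hr, h2, h3⟩⟩
    · exact ⟨1, fun hG hf => absurd ⟨hG, hf⟩ h⟩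
  choose rU hrU using keyU
  choose rW hrW using keyW
  set U : Set (Fin n → ℂ) :=
    ⋃ a ∈ {a | a ∈ G ∧ f a = OnePoint.infty}, ball a (rU a) with hU
  set W : Set (Fin n → ℂ) :=
    ⋃ a ∈ {a | a ∈ G ∧ f a ≠ OnePoint.infty}, ball a (rW a) with hW
  have hUopen : IsOpen U := isOpen_biUnion fun _ _ => isOpen_ball
  have hWopen : IsOpen W := isOpen_biUnion fun _ _ => isOpen_ball
  have hcover : G ⊆ U ∪ W := by
    intro z hz
    by_cases h : f z = OnePoint.infty
    · left
      exact mem_biUnion (show z ∈ {a | a ∈ G ∧ f a = OnePoint.infty} from ⟨hz, h⟩)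
        (mem_ball_self (hrU z hz h).1)
    · right
      exact mem_biUnion (show z ∈ {a | a ∈ G ∧ f a ≠ OnePoint.infty} from ⟨hz, h⟩)
        (mem_ball_self (hrW z hz h).1)
  have hUinf : ∀ z ∈ U, f z = OnePoint.infty := by
    intro z hz
    obtain ⟨a, ha, hz'⟩ := mem_iUnion₂.mp hz
    exact (hrU a ha.1 ha.2).2.2 z hz'
  have hWfin : ∀ z ∈ W, f z ≠ OnePoint.infty := by
    intro z hz
    obtain ⟨a, ha, hz'⟩ := mem_iUnion₂.mp hz
    exact (hrW a ha.1 ha.2).2.2 z hz'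
  have hUne : (G ∩ U).Nonempty := by
    refine ⟨z₀, hz₀, ?_⟩
    exact mem_biUnion (show z₀ ∈ {a | a ∈ G ∧ f a = OnePoint.infty} from ⟨hz₀, hfz₀⟩)
      (mem_ball_self (hrU z₀ hz₀ hfz₀).1)
  have hWne : (G ∩ W).Nonempty := by
    refine ⟨b, hb, ?_⟩
    exact mem_biUnion (show b ∈ {a | a ∈ G ∧ f a ≠ OnePoint.infty} from ⟨hb, hfb⟩)
      (mem_ball_self (hrW b hb hfb).1)
  obtain ⟨x, hxG, hxU, hxW⟩ := hGc.isPreconnected U W hUopen hWopen hcover hUne hWne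
  exact hWfin x hxW (hUinf x hxU)
end
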